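/- If H is a bipartite graph with Sidorenko's property, then K_2 □ H also has Sidorenko's property. -/

import Mathlib

open Finset

/-- The tensor-square graph on darts. -/
def psiGraph {W : Type} (G : SimpleGraph W) : SimpleGraph G.Dart where
  Adj d₁ d₂ := G.Adj d₁.toProd.1 d₂.toProd.1 ∧ G.Adj d₁.toProd.2 d₂.toProd.2
  symm := ⟨fun d₁ d₂ h => ⟨h.1.symm, h.2.symm⟩⟩
  loopless := ⟨fun d h => G.loopless.irrefl _ h.1⟩

def boxHomEquiv {VH W : Type} (H : SimpleGraph VH) (G : SimpleGraph W) :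
    ((⊤ : SimpleGraph (Fin 2)).boxProd H →g G) ≃ (H →g psiGraph G) where
  toFun f :=
    { toFun := fun u => ⟨(f (0, u), f (1, u)), f.map_adj (by
        simp [SimpleGraph.boxProd_adj])⟩
      map_rel' := fun {u v} h => ⟨f.map_adj (by simp [SimpleGraph.boxProd_adj, h]),
        f.map_adj (by simp [SimpleGraph.boxProd_adj, h])⟩ }
  invFun g :=
    { toFun := fun p => if p.1 = 0 then (g p.2).toProd.1 else (g p.2).toProd.2
      map_rel' := by
        rintro ⟨i, u⟩ ⟨j, v⟩ (⟨hij, rfl⟩ | ⟨huv, rfl⟩)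
        · have hij' : i ≠ j := by simpa using hij
          have hd := (g u).adj
          fin_cases i <;> fin_cases j <;>
            first | exact absurd rfl hij' | exact hd | exact hd.symm
        · have := g.map_adj huv
          by_cases hi : i = 0 <;> simp [hi] <;> [exact this.1; exact this.2] }
  left_inv f := by
    ext ⟨i, u⟩
    fin_cases i <;> rfl
  right_inv g := by
    ext u <;> rfl

def psiDartEquiv {W : Type} (G : SimpleGraph W) :
    (psiGraph G).Dart ≃
      Σ p : W × W, ({y // G.Adj p.1 y ∧ G.Adj y p.2} × {y // G.Adj p.1 y ∧ G.Adj y p.2}) where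
  toFun d := ⟨(d.toProd.1.toProd.1, d.toProd.2.toProd.2),
    ⟨d.toProd.1.toProd.2, d.toProd.1.adj, d.adj.2⟩,
    ⟨d.toProd.2.toProd.1, d.adj.1, d.toProd.2.adj⟩⟩
  invFun q := ⟨(⟨(q.1.1, q.2.1.1), q.2.1.2.1⟩, ⟨(q.2.2.1, q.1.2), q.2.2.2.2⟩),
    q.2.2.2.1, q.2.1.2.2⟩
  left_inv d := by
    apply SimpleGraph.Dart.ext
    apply Prod.ext <;> apply SimpleGraph.Dart.ext <;> rfl
  right_inv q := rfl

def pathEquiv {W : Type} (G : SimpleGraph W) :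
    (Σ p : W × W, {y // G.Adj p.1 y ∧ G.Adj y p.2}) ≃
      Σ y : W, ({x // G.Adj y x} × {z // G.Adj y z}) where
  toFun q := ⟨q.2.1, ⟨q.1.1, q.2.2.1.symm⟩, ⟨q.1.2, q.2.2.2⟩⟩
  invFun r := ⟨(r.2.1.1, r.2.2.1), r.1, r.2.1.2.symm, r.2.2.2⟩
  left_inv q := rfl
  right_inv r := rfl

lemma card_adj_subtype {W : Type} [Fintype W] (G : SimpleGraph W) [DecidableRel G.Adj] (y : W) :
    Fintype.card {x // G.Adj y x} = G.degree y := by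
  rw [← SimpleGraph.card_neighborSet_eq_degree]
  exact Fintype.card_congr (Equiv.subtypeEquivRight fun x => by
    simp [SimpleGraph.mem_neighborSet])

lemma psi_dart_card {W : Type} [Fintype W] (G : SimpleGraph W) [DecidableRel G.Adj] :
    Nat.card (psiGraph G).Dart
      = ∑ p : W × W, (Nat.card {y // G.Adj p.1 y ∧ G.Adj y p.2}) ^ 2 := by
  classical
  rw [Nat.card_congr (psiDartEquiv G), Nat.card_eq_fintype_card, Fintype.card_sigma]
  refine Finset.sum_congr rfl fun p _ => ?_
  simp [Fintype.card_prod, sq, Nat.card_eq_fintype_card]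

lemma codeg_sum {W : Type} [Fintype W] (G : SimpleGraph W) [DecidableRel G.Adj] :
    ∑ p : W × W, Nat.card {y // G.Adj p.1 y ∧ G.Adj y p.2}
      = ∑ y : W, (G.degree y) ^ 2 := by
  classical
  have h1 : ∑ p : W × W, Nat.card {y // G.Adj p.1 y ∧ G.Adj y p.2}
      = Fintype.card (Σ p : W × W, {y // G.Adj p.1 y ∧ G.Adj y p.2}) := by
    simp [Fintype.card_sigma, Nat.card_eq_fintype_card]
  rw [h1, Fintype.card_congr (pathEquiv G), Fintype.card_sigma]
  refine Finset.sum_congr rfl fun y _ => ?_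
  simp [Fintype.card_prod, sq, card_adj_subtype]

lemma box_edge_card {VH : Type} [Fintype VH] (H : SimpleGraph VH) :
    Nat.card ((⊤ : SimpleGraph (Fin 2)).boxProd H).edgeSet
      = 2 * Nat.card H.edgeSet + Fintype.card VH := by
  classical
  have hH2 : ∑ u : VH, H.degree u = 2 * Nat.card H.edgeSet := by
    rw [Nat.card_eq_fintype_card, ← SimpleGraph.edgeFinset_card]
    exact H.sum_degrees_eq_twice_card_edges
  have key : 2 * Nat.card ((⊤ : SimpleGraph (Fin 2)).boxProd H).edgeSet
      = 2 * (2 * Nat.card H.edgeSet + Fintype.card VH) := by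
    rw [Nat.card_eq_fintype_card, ← SimpleGraph.edgeFinset_card,
      ← SimpleGraph.sum_degrees_eq_twice_card_edges]
    have hdeg : ∀ p : Fin 2 × VH,
        ((⊤ : SimpleGraph (Fin 2)).boxProd H).degree p = 1 + H.degree p.2 := by
      intro p
      rw [SimpleGraph.degree_boxProd]
      simp
    trans (∑ p : Fin 2 × VH, (1 + H.degree p.2))
    · exact Finset.sum_congr rfl fun p _ => by convert hdeg p using 2
    · rw [Fintype.sum_prod_type]
      simp [Finset.sum_add_distrib, hH2]
      ring
  omega

lemma c4_bound {W : Type} [Fintype W] [Nonempty W] (G : SimpleGraph W) [DecidableRel G.Adj] :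
    (2 * (Nat.card G.edgeSet : ℝ)) ^ 4 / (Fintype.card W : ℝ) ^ 4
      ≤ ∑ p : W × W, ((Nat.card {y // G.Adj p.1 y ∧ G.Adj y p.2} : ℝ)) ^ 2 := by
  classical
  have hn : 0 < (Fintype.card W : ℝ) := by exact_mod_cast Fintype.card_pos
  set n : ℝ := (Fintype.card W : ℝ) with hn_def
  have hm : ∑ y : W, (G.degree y : ℝ) = 2 * (Nat.card G.edgeSet : ℝ) := by
    have : ∑ y : W, G.degree y = 2 * Nat.card G.edgeSet := by
      rw [Nat.card_eq_fintype_card, ← SimpleGraph.edgeFinset_card]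
      exact G.sum_degrees_eq_twice_card_edges
    exact_mod_cast congrArg (Nat.cast : ℕ → ℝ) this
  have hc : ∑ p : W × W, (Nat.card {y // G.Adj p.1 y ∧ G.Adj y p.2} : ℝ)
      = ∑ y : W, (G.degree y : ℝ) ^ 2 := by
    exact_mod_cast congrArg (Nat.cast : ℕ → ℝ) (codeg_sum G)
  have h1 : (∑ y : W, (G.degree y : ℝ)) ^ 2 ≤ n * ∑ y : W, (G.degree y : ℝ) ^ 2 := by
    simpa [Finset.card_univ] using
      sq_sum_le_card_mul_sum_sq (s := (Finset.univ : Finset W))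
        (f := fun y => (G.degree y : ℝ))
  have h2 : (∑ p : W × W, (Nat.card {y // G.Adj p.1 y ∧ G.Adj y p.2} : ℝ)) ^ 2
      ≤ n ^ 2 * ∑ p : W × W, (Nat.card {y // G.Adj p.1 y ∧ G.Adj y p.2} : ℝ) ^ 2 := by
    have := sq_sum_le_card_mul_sum_sq (s := (Finset.univ : Finset (W × W)))
      (f := fun p => (Nat.card {y // G.Adj p.1 y ∧ G.Adj y p.2} : ℝ))
    simpa [Finset.card_univ, Fintype.card_prod, sq, mul_assoc] using this
  have hstep1 : (2 * (Nat.card G.edgeSet : ℝ)) ^ 2 / n ≤ ∑ y : W, (G.degree y : ℝ) ^ 2 := by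
    rw [div_le_iff₀ hn, ← hm]
    calc (∑ y : W, (G.degree y : ℝ)) ^ 2 ≤ n * ∑ y : W, (G.degree y : ℝ) ^ 2 := h1
      _ = (∑ y : W, (G.degree y : ℝ) ^ 2) * n := by ring
  calc (2 * (Nat.card G.edgeSet : ℝ)) ^ 4 / n ^ 4
      = ((2 * (Nat.card G.edgeSet : ℝ)) ^ 2 / n) ^ 2 / n ^ 2 := by
        field_simp
    _ ≤ (∑ y : W, (G.degree y : ℝ) ^ 2) ^ 2 / n ^ 2 := by
        gcongr
    _ = (∑ p : W × W, (Nat.card {y // G.Adj p.1 y ∧ G.Adj y p.2} : ℝ)) ^ 2 / n ^ 2 := by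
        rw [hc]
    _ ≤ ∑ p : W × W, (Nat.card {y // G.Adj p.1 y ∧ G.Adj y p.2} : ℝ) ^ 2 := by
        rw [div_le_iff₀ (by positivity)]
        calc _ ≤ n ^ 2 * ∑ p : W × W, (Nat.card {y // G.Adj p.1 y ∧ G.Adj y p.2} : ℝ) ^ 2 := h2
          _ = _ := by ring

/-- if `H` is a bipartite graph with Sidorenko's property, then
`K_2 □ H` also has Sidorenko's property. -/
theorem boxProd_K2_sidorenko (VH : Type) [Fintype VH] (H : SimpleGraph VH)
    (hbip : H.Colorable 2)
    (hH : ∀ (W : Type) [Fintype W] [Nonempty W] (G : SimpleGraph W),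
      (Nat.card (H →g G) : ℝ) / (Fintype.card W : ℝ) ^ (Fintype.card VH) ≥
        (2 * (Nat.card G.edgeSet : ℝ) / (Fintype.card W : ℝ) ^ 2) ^
          (Nat.card H.edgeSet)) :
    ∀ (W : Type) [Fintype W] [Nonempty W] (G : SimpleGraph W),
      (Nat.card ((⊤ : SimpleGraph (Fin 2)).boxProd H →g G) : ℝ) /
          (Fintype.card W : ℝ) ^ (Fintype.card (Fin 2 × VH)) ≥
        (2 * (Nat.card G.edgeSet : ℝ) / (Fintype.card W : ℝ) ^ 2) ^
          (Nat.card ((⊤ : SimpleGraph (Fin 2)).boxProd H).edgeSet) := by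
  intro W _ _ G
  classical
  have hn : 0 < (Fintype.card W : ℝ) := by exact_mod_cast Fintype.card_pos
  rw [show Nat.card ((⊤ : SimpleGraph (Fin 2)).boxProd H →g G)
      = Nat.card (H →g psiGraph G) from Nat.card_congr (boxHomEquiv H G),
    box_edge_card H,
    show Fintype.card (Fin 2 × VH) = 2 * Fintype.card VH by simp [Fintype.card_prod]]
  set n : ℝ := (Fintype.card W : ℝ)
  set m : ℕ := Nat.card G.edgeSet with hm_def
  set e : ℕ := Nat.card H.edgeSet with he_def
  set v : ℕ := Fintype.card VH with hv_def
  by_cases hVH : IsEmpty VH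
  · have hv0 : v = 0 := by rw [hv_def]; exact Fintype.card_eq_zero
    have he0 : e = 0 := by
      haveI : IsEmpty H.edgeSet :=
        ⟨fun x => Sym2.ind (fun a _ _ => isEmptyElim a) x.1 x.2⟩
      rw [he_def]; exact Nat.card_of_isEmpty
    haveI : Unique (H →g psiGraph G) :=
      { default := ⟨fun u => isEmptyElim u, fun {a b} _ => isEmptyElim a⟩
        uniq := fun f => by ext u <;> exact isEmptyElim u }
    rw [Nat.card_unique, hv0, he0]
    norm_num
  · rw [not_isEmpty_iff] at hVH
    have hv1 : 1 ≤ v := by rw [hv_def]; exact Fintype.card_pos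
    by_cases hm : m = 0
    · have hz : (2 * (m : ℝ) / n ^ 2) ^ (2 * e + v) = 0 := by
        rw [hm]
        simp [pow_eq_zero_iff]
        omega
      rw [hz]
      positivity
    · have hdart : Fintype.card G.Dart = 2 * m := by
        rw [SimpleGraph.dart_card_eq_twice_card_edges, SimpleGraph.edgeFinset_card,
          hm_def, Nat.card_eq_fintype_card]
      haveI : Nonempty G.Dart := by
        rw [← Fintype.card_pos_iff, hdart]
        omega
      have hmain := hH G.Dart (psiGraph G)
      rw [hdart] at hmain
      have hpsi : 2 * Nat.card (psiGraph G).edgeSet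
          = ∑ p : W × W, (Nat.card {y // G.Adj p.1 y ∧ G.Adj y p.2}) ^ 2 := by
        have hd : Nat.card (psiGraph G).Dart = 2 * Nat.card (psiGraph G).edgeSet := by
          rw [Nat.card_eq_fintype_card, SimpleGraph.dart_card_eq_twice_card_edges,
            SimpleGraph.edgeFinset_card, Nat.card_eq_fintype_card]
        rw [← hd, psi_dart_card]
      set M : ℝ := 2 * (m : ℝ) with hM_def
      have hM : 0 < M := by
        have : 1 ≤ m := Nat.one_le_iff_ne_zero.mpr hm
        rw [hM_def]
        have : (1 : ℝ) ≤ (m : ℝ) := by exact_mod_cast this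
        linarith
      have hc4 : M ^ 4 / n ^ 4 ≤ 2 * (Nat.card (psiGraph G).edgeSet : ℝ) := by
        have : (2 * Nat.card (psiGraph G).edgeSet : ℕ) =
            ∑ p : W × W, (Nat.card {y // G.Adj p.1 y ∧ G.Adj y p.2}) ^ 2 := hpsi
        have hcast : 2 * (Nat.card (psiGraph G).edgeSet : ℝ)
            = ∑ p : W × W, ((Nat.card {y // G.Adj p.1 y ∧ G.Adj y p.2} : ℝ)) ^ 2 := by
          exact_mod_cast congrArg (Nat.cast : ℕ → ℝ) this
        rw [hcast, hM_def]
        exact c4_bound G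
      -- from hmain : Nat.card (H →g psiGraph G) / (↑(2*m))^v ≥ (2 * card ψE / (↑(2*m))^2)^e
      have hcast2 : ((2 * m : ℕ) : ℝ) = M := by rw [hM_def]; push_cast; ring
      rw [hcast2] at hmain
      have hstep : (M ^ 2 / n ^ 4) ^ e ≤ (2 * (Nat.card (psiGraph G).edgeSet : ℝ) / M ^ 2) ^ e := by
        have hbase : M ^ 2 / n ^ 4 ≤ 2 * (Nat.card (psiGraph G).edgeSet : ℝ) / M ^ 2 := by
          rw [div_le_div_iff₀ (by positivity) (by positivity)]
          have h4 : M ^ 4 ≤ 2 * (Nat.card (psiGraph G).edgeSet : ℝ) * n ^ 4 :=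
            (div_le_iff₀ (by positivity)).mp hc4
          calc M ^ 2 * M ^ 2 = M ^ 4 := by ring
            _ ≤ _ := h4
        exact pow_le_pow_left₀ (by positivity) hbase e
      have hN : (M ^ 2 / n ^ 4) ^ e * M ^ v ≤ (Nat.card (H →g psiGraph G) : ℝ) := by
        have h1 : (2 * (Nat.card (psiGraph G).edgeSet : ℝ) / M ^ 2) ^ e
            ≤ (Nat.card (H →g psiGraph G) : ℝ) / M ^ v := hmain
        have h2 : (M ^ 2 / n ^ 4) ^ e ≤ (Nat.card (H →g psiGraph G) : ℝ) / M ^ v :=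
          hstep.trans h1
        calc (M ^ 2 / n ^ 4) ^ e * M ^ v
            ≤ ((Nat.card (H →g psiGraph G) : ℝ) / M ^ v) * M ^ v := by
              gcongr
          _ = _ := by field_simp
      have hx : (M / n ^ 2) ^ (2 * e + v) = ((M ^ 2 / n ^ 4) ^ e * M ^ v) / n ^ (2 * v) := by
        rw [pow_add, pow_mul]
        have : (M / n ^ 2) ^ 2 = M ^ 2 / n ^ 4 := by field_simp
        rw [this, div_pow, ← pow_mul]
        field_simp
        ring_nf
        rw [mul_assoc, ← mul_pow, mul_inv_cancel₀ hn.ne', one_pow, mul_one]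
      rw [ge_iff_le, hM_def] at *
      calc (2 * (m : ℝ) / n ^ 2) ^ (2 * e + v)
          = ((M ^ 2 / n ^ 4) ^ e * M ^ v) / n ^ (2 * v) := by rw [← hM_def, hx]
        _ ≤ (Nat.card (H →g psiGraph G) : ℝ) / n ^ (2 * v) := by gcongr
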